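/- For any prime p ≥ 5, C(2p − 1, p − 1) ≡ 1 modulo p^3. -/

import Mathlib

open Polynomial Finset

noncomputable def qInt (n : ℕ) : Polynomial ℤ := ∑ i ∈ Finset.range n, X ^ i

noncomputable def qBinom : ℕ → ℕ → Polynomial ℤ
  | _, 0 => 1
  | 0, _ + 1 => 0
  | n + 1, k + 1 => qBinom n k + X ^ (k + 1) * qBinom n (k + 1)

private lemma wol_sum_inv_sq (p : ℕ) [Fact p.Prime] (hp5 : 5 ≤ p) :
    ∑ k ∈ Finset.range p, ((k : ZMod p)⁻¹)^2 = 0 := by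
  have hcard : Fintype.card (ZMod p) = p := ZMod.card p
  have h1 : ∑ k ∈ Finset.range p, ((k : ZMod p)⁻¹)^2 = ∑ x : ZMod p, (x⁻¹)^2 := by
    refine Finset.sum_nbij' (fun k => (k : ZMod p)) (fun x => x.val) ?_ ?_ ?_ ?_ ?_
    · intro a _; exact Finset.mem_univ _
    · intro b _; exact Finset.mem_range.mpr (ZMod.val_lt b)
    · intro a ha; exact ZMod.val_natCast_of_lt (Finset.mem_range.mp ha)
    · intro b _; exact ZMod.natCast_rightInverse b
    · intro a _; rfl
  have h2 : ∑ x : ZMod p, (x⁻¹)^2 = ∑ x : ZMod p, x^2 :=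
    Fintype.sum_bijective _ inv_involutive.bijective _ _ (fun x => rfl)
  rw [h1, h2]
  refine FiniteField.sum_pow_lt_card_sub_one _ 2 ?_
  rw [hcard]; omega

private lemma wol_choose_pred (p : ℕ) (hp : p.Prime) :
    ∀ k, k ≤ p - 1 → (((p-1).choose k : ZMod p)) = (-1)^k := by
  intro k
  induction k with
  | zero => simp
  | succ k ih =>
    intro hk
    have hp2 := hp.two_le
    have hk' : k ≤ p - 1 := by omega
    have hdvd : (p:ℕ) ∣ p.choose (k+1) :=
      hp.dvd_choose_self (Nat.succ_ne_zero k) (by omega)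
    have hc : (p-1).choose k + (p-1).choose (k+1) = p.choose (k+1) := by
      rw [← Nat.choose_succ_succ]
      congr 1
      omega
    have h0 : ((p.choose (k+1) : ℕ) : ZMod p) = 0 :=
      (ZMod.natCast_eq_zero_iff _ _).mpr hdvd
    have := congrArg (fun n : ℕ => (n : ZMod p)) hc
    push_cast at this
    rw [ih hk'] at this
    rw [h0] at this
    have : ((p-1).choose (k+1) : ZMod p) = -(-1)^k := by linear_combination this
    rw [this, pow_succ]
    ring

theorem wolstenholme_congruence (p : ℕ) (hp : p.Prime) (hp5 : 5 ≤ p) :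
    ((2 * p - 1).choose (p - 1) : ℤ) ≡ 1 [ZMOD ((p : ℤ) ^ 3)] := by
  haveI : Fact p.Prime := ⟨hp⟩
  have hp2 := hp.two_le
  -- step 1: 2 * C(2p-1, p-1) = C(2p, p)
  have hdouble : 2 * (2 * p - 1).choose (p - 1) = (2 * p).choose p := by
    have h := Nat.add_one_mul_choose_eq (2 * p - 1) (p - 1)
    have h1 : 2 * p - 1 + 1 = 2 * p := by omega
    have h2 : p - 1 + 1 = p := by omega
    rw [h1, h2] at h
    have hpne : 0 < p := by omega
    have : 2 * p * (2 * p - 1).choose (p - 1) = 2 * ((2 * p - 1).choose (p-1)) * p := by ring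
    rw [this] at h
    exact Nat.eq_of_mul_eq_mul_right hpne h
  -- step 2: Vandermonde
  have hVan : (2 * p).choose p = ∑ k ∈ range (p + 1), p.choose k * p.choose k := by
    have h := Nat.add_choose_eq p p p
    rw [← two_mul] at h
    rw [h, Finset.Nat.sum_antidiagonal_eq_sum_range_succ_mk]
    refine Finset.sum_congr rfl ?_
    intro k hk
    have hk' := Finset.mem_range.mp hk
    rw [Nat.choose_symm (by omega : k ≤ p)]
  -- notation
  set F : ℕ := (p - 1).factorial with hF
  have hpF : ¬ (p ∣ F) := by
    rw [hF, hp.dvd_factorial]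
    omega
  set a : ℕ → ℕ := fun k => F / k with ha
  set c : ℕ → ℕ := fun k => (p - 1).choose (k - 1) with hc
  have hak : ∀ k ∈ Finset.Ico 1 p, k * a k = F := by
    intro k hk
    rw [Finset.mem_Ico] at hk
    exact Nat.mul_div_cancel' (Nat.dvd_factorial (by omega) (by omega))
  have hck : ∀ k ∈ Finset.Ico 1 p, p * c k = p.choose k * k := by
    intro k hk
    rw [Finset.mem_Ico] at hk
    have h := Nat.add_one_mul_choose_eq (p - 1) (k - 1)
    have h1 : p - 1 + 1 = p := by omega
    have h2 : k - 1 + 1 = k := by omega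
    rw [h1, h2] at h
    exact h
  -- square identity (nat)
  have hM : ∀ k ∈ Finset.Ico 1 p, F^2 * (p.choose k)^2 = p^2 * (a k * c k)^2 := by
    intro k hk
    have h1 := hak k hk
    have h2 := hck k hk
    calc F^2 * (p.choose k)^2 = (a k)^2 * (p.choose k * k)^2 := by rw [← h1]; ring
      _ = (a k)^2 * (p * c k)^2 := by rw [h2]
      _ = p^2 * (a k * c k)^2 := by ring
  -- c k ^ 2 ≡ 1 mod p
  have hcsq : ∀ k ∈ Finset.Ico 1 p, ∃ d : ℕ, (c k)^2 = 1 + p * d := by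
    intro k hk
    rw [Finset.mem_Ico] at hk
    have hz : ((c k : ℕ) : ZMod p) = (-1)^(k-1) := wol_choose_pred p hp (k-1) (by omega)
    have hsq : (((c k)^2 : ℕ) : ZMod p) = 1 := by
      push_cast
      rw [hz, ← pow_mul]
      exact Even.neg_one_pow ⟨k - 1, by ring⟩
    have hpos : 1 ≤ (c k)^2 := by
      have : 0 < c k := Nat.choose_pos (by omega)
      exact Nat.one_le_pow 2 _ this
    have hdvd : p ∣ (c k)^2 - 1 := by
      have : (((c k)^2 - 1 : ℕ) : ZMod p) = 0 := by
        rw [Nat.cast_sub hpos, hsq]; ring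
      exact (ZMod.natCast_eq_zero_iff _ _).mp this
    obtain ⟨d, hd⟩ := hdvd
    exact ⟨d, by omega⟩
  -- work in R := ZMod (p^3)
  have hp3 : ((p^3 : ℕ) : ZMod (p^3)) = 0 := ZMod.natCast_self _
  have hterm : ∀ k ∈ Finset.Ico 1 p,
      (F : ZMod (p^3))^2 * (p.choose k : ZMod (p^3))^2
        = (p : ZMod (p^3))^2 * (a k : ZMod (p^3))^2 := by
    intro k hk
    obtain ⟨d, hd⟩ := hcsq k hk
    have h1 := congrArg (fun n : ℕ => (n : ZMod (p^3))) (hM k hk)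
    push_cast at h1
    have h2 := congrArg (fun n : ℕ => (n : ZMod (p^3))) hd
    push_cast at h2
    calc (F : ZMod (p^3))^2 * (p.choose k : ZMod (p^3))^2
        = (p:ZMod (p^3))^2 * ((a k : ZMod (p^3)) * (c k : ZMod (p^3)))^2 := h1
      _ = (p:ZMod (p^3))^2 * (a k:ZMod (p^3))^2 * (c k : ZMod (p^3))^2 := by ring
      _ = (p:ZMod (p^3))^2 * (a k:ZMod (p^3))^2 * (1 + p * d) := by rw [h2]
      _ = (p:ZMod (p^3))^2 * (a k:ZMod (p^3))^2
            + ((p^3 : ℕ) : ZMod (p^3)) * ((a k:ZMod (p^3))^2 * d) := by push_cast; ring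
      _ = (p:ZMod (p^3))^2 * (a k:ZMod (p^3))^2 := by rw [hp3]; ring
  -- p divides the sum of a k ^ 2
  have hT : (p : ℕ) ∣ ∑ k ∈ Finset.Ico 1 p, (a k)^2 := by
    rw [← ZMod.natCast_eq_zero_iff]
    push_cast
    have hA : ∀ k ∈ Finset.Ico 1 p,
        (a k : ZMod p)^2 = (F : ZMod p)^2 * ((k : ZMod p)⁻¹)^2 := by
      intro k hk
      have h1 := congrArg (fun n : ℕ => (n : ZMod p)) (hak k hk)
      push_cast at h1
      rw [Finset.mem_Ico] at hk
      have hk0 : (k : ZMod p) ≠ 0 := by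
        rw [Ne, ZMod.natCast_eq_zero_iff]
        intro hdvd
        have := Nat.le_of_dvd (by omega) hdvd
        omega
      have : (a k : ZMod p) = (F : ZMod p) * ((k : ZMod p)⁻¹) := by
        field_simp
        linear_combination h1
      rw [this]; ring
    rw [Finset.sum_congr rfl hA, ← Finset.mul_sum]
    have : ∑ k ∈ Finset.Ico 1 p, ((k : ZMod p)⁻¹)^2
        = ∑ k ∈ Finset.range p, ((k : ZMod p)⁻¹)^2 := by
      rw [Finset.range_eq_Ico, Finset.sum_eq_sum_Ico_succ_bot (by omega : 0 < p)]
      simp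
    rw [this, wol_sum_inv_sq p hp5, mul_zero]
  -- now assemble in ZMod (p^3)
  have hmain : (F : ZMod (p^3))^2 * ((2 * p).choose p : ZMod (p^3))
      = (F : ZMod (p^3))^2 * 2 := by
    have hsplit : range (p+1) = insert 0 (insert p (Finset.Ico 1 p)) := by
      ext x
      simp [Finset.mem_Ico, Finset.mem_range]
      omega
    have h0 : (0:ℕ) ∉ insert p (Finset.Ico 1 p) := by simp; omega
    have hpnot : p ∉ Finset.Ico 1 p := by simp
    calc (F : ZMod (p^3))^2 * ((2 * p).choose p : ZMod (p^3))
        = ∑ k ∈ range (p+1), (F : ZMod (p^3))^2 * (p.choose k : ZMod (p^3))^2 := by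
          rw [hVan]; push_cast; rw [Finset.mul_sum]; refine Finset.sum_congr rfl ?_
          intro k _; ring
      _ = (F : ZMod (p^3))^2 + ((F : ZMod (p^3))^2
            + ∑ k ∈ Finset.Ico 1 p, (F : ZMod (p^3))^2 * (p.choose k : ZMod (p^3))^2) := by
          rw [hsplit, Finset.sum_insert h0, Finset.sum_insert hpnot]
          simp
      _ = 2 * (F : ZMod (p^3))^2
            + (p : ZMod (p^3))^2 * ((∑ k ∈ Finset.Ico 1 p, (a k)^2 : ℕ) : ZMod (p^3)) := by
          rw [Finset.sum_congr rfl hterm]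
          push_cast
          rw [Finset.mul_sum]
          ring
      _ = (F : ZMod (p^3))^2 * 2 := by
          obtain ⟨t, ht⟩ := hT
          rw [ht]
          push_cast
          have : (p : ZMod (p^3))^2 * ((p : ZMod (p^3)) * (t : ZMod (p^3)))
              = ((p^3:ℕ) : ZMod (p^3)) * t := by push_cast; ring
          rw [this, hp3]
          ring
  -- cancel F^2
  have hFu : IsUnit (F : ZMod (p^3)) := by
    rw [ZMod.isUnit_iff_coprime]
    exact ((hp.coprime_iff_not_dvd.mpr hpF).symm.pow_right 3)
  have hchoose : ((2 * p).choose p : ZMod (p^3)) = 2 :=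
    (hFu.pow 2).mul_left_cancel hmain
  have h2u : IsUnit (2 : ZMod (p^3)) := by
    have : ((2:ℕ) : ZMod (p^3)) = 2 := by norm_cast
    rw [← this, ZMod.isUnit_iff_coprime]
    exact ((Nat.coprime_primes Nat.prime_two hp).mpr (by omega)).pow_right 3
  have hfinal : (((2 * p - 1).choose (p - 1) : ℕ) : ZMod (p^3)) = 1 := by
    refine h2u.mul_left_cancel ?_
    have h := congrArg (fun n : ℕ => (n : ZMod (p^3))) hdouble
    push_cast at h
    rw [h, hchoose]
    ring
  have hnat : (2 * p - 1).choose (p - 1) ≡ 1 [MOD p^3] := by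
    have : (((2 * p - 1).choose (p - 1) : ℕ) : ZMod (p^3)) = ((1:ℕ) : ZMod (p^3)) := by
      simpa using hfinal
    exact (ZMod.natCast_eq_natCast_iff _ _ _).mp this
  have hmod : ((p:ℤ))^3 = ((p^3 : ℕ) : ℤ) := by push_cast; ring
  rw [hmod]
  exact_mod_cast Int.natCast_modEq_iff.mpr hnat
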